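/- Let κ be an infinite cardinal. If 2^κ = κ⁺, then there exists a strongly independent family on κ⁺ of cardinality κ. -/

import Mathlib

open Cardinal

/-- if `2^κ = κ⁺`, then on any set of cardinality `κ⁺` there is a strongly
independent family of cardinality `κ`: every Boolean combination of length `< κ⁺`
has size `κ⁺`.  Here `I^0 = I` (sign `false`) and `I^1 = complement` (sign `true`). -/
theorem CH_implies_strongly_independent (κ : Cardinal.{0}) (hκ : ℵ₀ ≤ κ)
    (α : Type) (hα : #α = Order.succ κ) (h2 : 2 ^ κ = Order.succ κ) :
    ∃ 𝓘 : Set (Set α), #𝓘 = κ ∧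
      ∀ D ⊆ 𝓘, #D < Order.succ κ → ∀ f : Set α → Bool,
        #(↥(⋂ I ∈ D, (if f I then Iᶜ else I))) = Order.succ κ := by
  classical
  have hsucc_inf : ℵ₀ ≤ Order.succ κ := hκ.trans (Order.le_succ κ)
  have hKB : #(κ.out → Bool) = Order.succ κ := by
    rw [← h2, ← Cardinal.mk_out κ, ← Cardinal.power_def, Cardinal.mk_bool, Cardinal.mk_out]
  have hcard : #α = #((κ.out → Bool) × α) := by
    rw [Cardinal.mk_prod, Cardinal.lift_id, Cardinal.lift_id, hKB, hα,
      Cardinal.mul_eq_self hsucc_inf]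
  obtain ⟨e⟩ := Cardinal.eq.mp hcard
  have hne : Nonempty α := Cardinal.mk_ne_zero_iff.mp (by
    rw [hα]
    exact ne_of_gt (lt_of_le_of_lt (zero_le : (0 : Cardinal) ≤ κ) (Order.lt_succ κ)))
  obtain ⟨a₀⟩ := hne
  set φ : κ.out → Set α := fun k => {a | (e a).1 k = true} with hφ
  have hinj : Function.Injective φ := by
    intro k k' h
    set a := e.symm (fun j => decide (j = k), a₀) with ha
    have h1 : a ∈ φ k := by
      simp [hφ, ha, Equiv.apply_symm_apply]
    rw [h] at h1
    have h2 : (e a).1 k' = true := h1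
    rw [ha, Equiv.apply_symm_apply] at h2
    exact (of_decide_eq_true h2).symm
  refine ⟨Set.range φ, ?_, ?_⟩
  · rw [Cardinal.mk_range_eq φ hinj, Cardinal.mk_out]
  intro D hD _ f
  set g₀ : κ.out → Bool := fun k => if φ k ∈ D then !f (φ k) else true with hg₀
  have hmem : ∀ a : α, e.symm (g₀, a) ∈ ⋂ I ∈ D, (if f I then Iᶜ else I) := by
    intro a
    refine Set.mem_iInter₂.mpr fun I hI => ?_
    obtain ⟨k, rfl⟩ := hD hI
    have hg : (e (e.symm (g₀, a))).1 k = g₀ k := by rw [Equiv.apply_symm_apply]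
    have hgk : g₀ k = !f (φ k) := if_pos hI
    cases hf : f (φ k) with
    | false =>
      rw [if_neg (by simp [hf])]
      show (e (e.symm (g₀, a))).1 k = true
      rw [hg, hgk, hf]
      rfl
    | true =>
      rw [if_pos (by simp [hf])]
      show ¬ ((e (e.symm (g₀, a))).1 k = true)
      rw [hg, hgk, hf]
      simp
  have hψ : Function.Injective (fun a : α =>
      (⟨e.symm (g₀, a), hmem a⟩ : ↥(⋂ I ∈ D, (if f I then Iᶜ else I)))) := by
    intro a a' h
    have := congrArg Subtype.val h
    simp only at this
    have := e.symm.injective this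
    exact (Prod.mk.injEq _ _ _ _ ▸ this).2
  refine le_antisymm ?_ ?_
  · rw [← hα]; exact Cardinal.mk_subtype_le _
  · rw [← hα]; exact Cardinal.mk_le_of_injective hψ
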